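/- Minimizing the cost functional C(M_0,…,M_K) = Σ_{k=0}^{K} M_{K−k} η^{kγ} over positive reals M_{K−k}, subject to the error constraint Σ_{k=0}^{K} C_I C_ζ M_{K−k}^{−μ} η^{−kβ} = ε/2, is achieved by M_{K−k} = (2 C_I C_ζ S(η,K)/ε)^{1/μ} · η^{−k(β+γ)/(μ+1)}, where S(η,K) = Σ_{k=0}^{K} η^{−k(β−γμ)/(μ+1)}; moreover this choice satisfies the constraint with equality. -/

import Mathlib

open Real Finset

lemma young_aux (μ t : ℝ) (hμ : 0 < μ) (ht : 0 < t) : μ + 1 ≤ μ * t + t ^ (-μ) := by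
  have hμ1 : (0:ℝ) < μ + 1 := by linarith
  have h := Real.geom_mean_le_arith_mean2_weighted
    (w₁ := μ/(μ+1)) (w₂ := 1/(μ+1)) (p₁ := t) (p₂ := t^(-μ))
    (by positivity) (by positivity) ht.le (by positivity)
    (by field_simp)
  have h1 : t ^ (μ/(μ+1)) * (t^(-μ)) ^ (1/(μ+1)) = 1 := by
    rw [← Real.rpow_mul ht.le, ← Real.rpow_add ht]
    rw [show -μ * (1/(μ+1)) = -(μ/(μ+1)) by ring]
    simp
  rw [h1] at h
  have := mul_le_mul_of_nonneg_left h hμ1.le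
  calc μ + 1 = (μ+1) * 1 := by ring
    _ ≤ (μ+1) * (μ/(μ+1) * t + 1/(μ+1) * t^(-μ)) := this
    _ = μ * t + t ^ (-μ) := by field_simp

lemma pointwise_min (μ a b m x : ℝ) (hμ : 0 < μ) (ha : 0 < a) (hm : 0 < m) (hx : 0 < x)
    (hb : μ * b = a * m ^ (μ + 1)) :
    a * m + b * m ^ (-μ) ≤ a * x + b * x ^ (-μ) := by
  have hQ : x ^ (-μ) = m ^ (-μ) * (x/m) ^ (-μ) := by
    rw [← Real.mul_rpow hm.le (by positivity)]
    rw [mul_div_cancel₀ _ hm.ne']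
  have hc : μ * (b * m ^ (-μ)) = a * m := by
    have : m ^ (μ+1) * m ^ (-μ) = m := by
      rw [← Real.rpow_add hm]; simp
    calc μ * (b * m ^ (-μ)) = (μ * b) * m ^ (-μ) := by ring
      _ = a * (m ^ (μ+1) * m ^ (-μ)) := by rw [hb]; ring
      _ = a * m := by rw [this]
  set c := b * m ^ (-μ) with hcdef
  have hcpos : 0 < c := by nlinarith
  have key := young_aux μ (x/m) hμ (by positivity)
  have h2 := mul_le_mul_of_nonneg_left key hcpos.le
  have h3 : c * (μ * (x/m)) = a * x := by
    field_simp at hc ⊢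
    nlinarith [hc]
  rw [hQ, ← mul_assoc b, ← hcdef]
  nlinarith [h2, h3, hc]

theorem optimal_sample_allocation
    (η β γ μ ε CI Cζ : ℝ) (hη : 1 < η) (hβ : 0 < β) (hγ : 0 < γ)
    (hμ : 0 < μ) (hε : 0 < ε) (hCI : 0 < CI) (hCζ : 0 < Cζ)
    (K : ℕ)
    (S : ℝ) (hS : S = ∑ k ∈ Finset.range (K + 1),
      η ^ (-(k : ℝ) * (β - γ * μ) / (μ + 1)))
    (M : ℕ → ℝ)
    (hM : ∀ k, M k = (2 * CI * Cζ * S / ε) ^ (1 / μ)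
        * η ^ (-(k : ℝ) * (β + γ) / (μ + 1))) :
    -- the constraint is satisfied with equality
    (∑ k ∈ Finset.range (K + 1), CI * Cζ * (M k) ^ (-μ) * η ^ (-(k : ℝ) * β)
        = ε / 2) ∧
    -- and the choice minimizes the cost among all positive allocations
    -- satisfying the error constraint
    (∀ N : ℕ → ℝ, (∀ k ∈ Finset.range (K + 1), 0 < N k) →
      (∑ k ∈ Finset.range (K + 1),
          CI * Cζ * (N k) ^ (-μ) * η ^ (-(k : ℝ) * β) = ε / 2) →
      ∑ k ∈ Finset.range (K + 1), M k * η ^ ((k : ℝ) * γ)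
        ≤ ∑ k ∈ Finset.range (K + 1), N k * η ^ ((k : ℝ) * γ)) := by
  have hη0 : (0:ℝ) < η := by linarith
  have hμ1 : (0:ℝ) < μ + 1 := by linarith
  have hS0 : 0 < S := by
    rw [hS]
    apply Finset.sum_pos (fun k _ => Real.rpow_pos_of_pos hη0 _)
    exact ⟨0, by simp⟩
  set A : ℝ := 2 * CI * Cζ * S / ε with hA
  have hA0 : 0 < A := by positivity
  have hM0 : ∀ k, 0 < M k := fun k => by
    rw [hM k]
    exact mul_pos (Real.rpow_pos_of_pos hA0 _) (Real.rpow_pos_of_pos hη0 _)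
  -- per-term constraint identity
  have hterm : ∀ k : ℕ, CI * Cζ * (M k) ^ (-μ) * η ^ (-(k : ℝ) * β)
      = CI * Cζ / A * η ^ (-(k : ℝ) * (β - γ * μ) / (μ + 1)) := by
    intro k
    rw [hM k]
    rw [Real.mul_rpow (Real.rpow_pos_of_pos hA0 _).le (Real.rpow_pos_of_pos hη0 _).le]
    rw [← Real.rpow_mul hA0.le, ← Real.rpow_mul hη0.le]
    rw [show (1/μ) * (-μ) = -1 by field_simp]
    rw [Real.rpow_neg_one]
    have h12 : η ^ (-(k:ℝ) * (β + γ) / (μ + 1) * -μ) * η ^ (-(k:ℝ) * β)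
        = η ^ (-(k:ℝ) * (β - γ * μ) / (μ + 1)) := by
      rw [← Real.rpow_add hη0]
      congr 1
      field_simp
      ring
    linear_combination (CI * Cζ / A) * h12
  have hconstraint : ∑ k ∈ Finset.range (K + 1),
      CI * Cζ * (M k) ^ (-μ) * η ^ (-(k : ℝ) * β) = ε / 2 := by
    calc ∑ k ∈ Finset.range (K + 1), CI * Cζ * (M k) ^ (-μ) * η ^ (-(k : ℝ) * β)
        = ∑ k ∈ Finset.range (K + 1),
            CI * Cζ / A * η ^ (-(k : ℝ) * (β - γ * μ) / (μ + 1)) := by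
          exact Finset.sum_congr rfl (fun k _ => hterm k)
      _ = CI * Cζ / A * S := by rw [← Finset.mul_sum, hS]
      _ = ε / 2 := by
          rw [hA]
          field_simp
  refine ⟨hconstraint, ?_⟩
  intro N hN hNc
  set L : ℝ := A ^ ((μ+1)/μ) / (μ * CI * Cζ) with hL
  have hL0 : 0 < L := by
    apply div_pos (Real.rpow_pos_of_pos hA0 _)
    positivity
  -- pointwise bound
  have hpt : ∀ k ∈ Finset.range (K + 1),
      M k * η ^ ((k:ℝ) * γ) + L * (CI * Cζ * (M k) ^ (-μ) * η ^ (-(k : ℝ) * β))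
      ≤ N k * η ^ ((k:ℝ) * γ) + L * (CI * Cζ * (N k) ^ (-μ) * η ^ (-(k : ℝ) * β)) := by
    intro k hk
    have ha : (0:ℝ) < η ^ ((k:ℝ) * γ) := Real.rpow_pos_of_pos hη0 _
    have hb : μ * (L * CI * Cζ * η ^ (-(k : ℝ) * β))
        = η ^ ((k:ℝ) * γ) * (M k) ^ (μ + 1) := by
      rw [hM k]
      rw [Real.mul_rpow (Real.rpow_pos_of_pos hA0 _).le (Real.rpow_pos_of_pos hη0 _).le]
      rw [← Real.rpow_mul hA0.le, ← Real.rpow_mul hη0.le]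
      rw [show (1/μ) * (μ+1) = (μ+1)/μ by field_simp]
      rw [show -(k:ℝ) * (β + γ) / (μ + 1) * (μ + 1) = -(k:ℝ) * (β + γ) by
        field_simp]
      rw [hL]
      rw [show η ^ ((k:ℝ)*γ) * (A ^ ((μ+1)/μ) * η ^ (-(k:ℝ)*(β+γ)))
          = A ^ ((μ+1)/μ) * (η ^ ((k:ℝ)*γ) * η ^ (-(k:ℝ)*(β+γ))) by ring]
      rw [← Real.rpow_add hη0]
      rw [show (k:ℝ)*γ + -(k:ℝ)*(β+γ) = -(k:ℝ)*β by ring]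
      field_simp
    have := pointwise_min μ (η ^ ((k:ℝ) * γ)) (L * CI * Cζ * η ^ (-(k : ℝ) * β))
      (M k) (N k) hμ ha (hM0 k) (hN k hk) hb
    nlinarith [this]
  have hsum := Finset.sum_le_sum hpt
  rw [Finset.sum_add_distrib, Finset.sum_add_distrib, ← Finset.mul_sum, ← Finset.mul_sum,
    hconstraint, hNc] at hsum
  linarith
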